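/- arXiv:1804.04933 — 6 statements merged into one kernel-verified Lean document; each statement's English description precedes it below -/
import Mathlib

section
/- Let A ∈ ℝ^{n×n}, B ∈ ℝ^{n×m}, K ∈ ℝ^{m×n}, L ∈ ℝ^{n×p}, M ∈ ℝ^{p×n}, A_z ∈ ℝ^{p×p}. Let G = [[A, L], [M, A_z]] ∈ ℝ^{(n+p)×(n+p)} be the system matrix of the pre-existing (uncontrolled) interconnection, and let 𝓜 = [[A + B·K, L, −B·K], [M, A_z, 0], [0, L, A]] ∈ ℝ^{(n+p+n)×(n+p+n)} be the closed-loop matrix obtained by attaching the retrofit controller (with internal model state x̂ obeying x̂' = A x̂ + L z and control u = K(x − x̂)) to the subsystem x' = A x + B u + L z, z' = M x + A_z z. Then the characteristic polynomial of 𝓜 equals the product of the characteristic polynomial of G and the characteristic polynomial of A + B·K. -/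
open Matrix Polynomial

/-- Characteristic polynomial is invariant under conjugation by an involutive matrix. -/
lemma charpoly_conj_invol {ι : Type*} [Fintype ι] [DecidableEq ι]
    (S M : Matrix ι ι ℝ) (h : S * S = 1) :
    (S * M * S).charpoly = M.charpoly := by
  have hS1 : S.map (C : ℝ →+* ℝ[X]) * S.map (C : ℝ →+* ℝ[X]) = 1 := by
    rw [← Matrix.map_mul, h, Matrix.map_one _ C.map_zero C.map_one]
  have key : charmatrix (S * M * S)
      = S.map (C : ℝ →+* ℝ[X]) * charmatrix M * S.map (C : ℝ →+* ℝ[X]) := by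
    simp only [charmatrix, RingHom.mapMatrix_apply]
    rw [Matrix.mul_sub, Matrix.sub_mul]
    congr 1
    · rw [(Matrix.scalar_commute (X : ℝ[X]) (fun r => Commute.all _ _) (S.map C)).symm.eq,
        Matrix.mul_assoc, hS1, Matrix.mul_one]
    · rw [Matrix.map_mul, Matrix.map_mul]
  rw [charpoly, charpoly, key, det_mul, det_mul]
  have h2 : (S.map (C : ℝ →+* ℝ[X])).det * (S.map (C : ℝ →+* ℝ[X])).det = 1 := by
    rw [← det_mul, hS1, det_one]
  ring_nf
  rw [sq, h2, one_mul]

/-- The characteristic polynomial of the retrofit closed-loop matrix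
`𝓜 = [[A + B·K, L, −B·K], [M, A_z, 0], [0, L, A]]` equals the product of the
characteristic polynomial of the pre-existing system matrix `G = [[A, L], [M, A_z]]`
and the characteristic polynomial of `A + B·K`. -/
theorem retrofit_charpoly_mul {n m p : ℕ}
    (A : Matrix (Fin n) (Fin n) ℝ) (B : Matrix (Fin n) (Fin m) ℝ)
    (K : Matrix (Fin m) (Fin n) ℝ) (L : Matrix (Fin n) (Fin p) ℝ)
    (M : Matrix (Fin p) (Fin n) ℝ) (Az : Matrix (Fin p) (Fin p) ℝ) :
    (Matrix.fromBlocks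
        (Matrix.fromBlocks (A + B * K) L M Az)
        (Matrix.fromRows (-(B * K)) (0 : Matrix (Fin p) (Fin n) ℝ))
        (Matrix.fromCols (0 : Matrix (Fin n) (Fin n) ℝ) L)
        A).charpoly
      = (Matrix.fromBlocks A L M Az).charpoly * (A + B * K).charpoly := by
  set 𝓜 := Matrix.fromBlocks
        (Matrix.fromBlocks (A + B * K) L M Az)
        (Matrix.fromRows (-(B * K)) (0 : Matrix (Fin p) (Fin n) ℝ))
        (Matrix.fromCols (0 : Matrix (Fin n) (Fin n) ℝ) L)
        A with h𝓜
  set S : Matrix ((Fin n ⊕ Fin p) ⊕ Fin n) ((Fin n ⊕ Fin p) ⊕ Fin n) ℝ :=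
    Matrix.fromBlocks 1 0 (Matrix.fromCols 1 0) (-1) with hS
  have hSS : S * S = 1 := by
    simp [hS, Matrix.fromBlocks_multiply, Matrix.fromCols_mul_fromBlocks,
      ← Matrix.fromBlocks_one]
    ext i (j | j) <;> simp
  have hconj : S * 𝓜 * S
      = Matrix.fromBlocks (Matrix.fromBlocks A L M Az)
          (Matrix.fromRows (B * K) (0 : Matrix (Fin p) (Fin n) ℝ)) 0 (A + B * K) := by
    simp [hS, h𝓜, Matrix.fromBlocks_multiply, Matrix.fromCols_mul_fromBlocks,
      Matrix.fromCols_mul_fromRows, Matrix.fromBlocks_mul_fromRows,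
      Matrix.fromRows_mul_fromCols, Matrix.mul_fromCols, Matrix.fromRows_mul]
    constructor
    · ext (i | i) (j | j) <;> simp [Matrix.mul_apply]
    · ext (i | i) (j | j) <;> simp [Matrix.mul_apply] <;> ring
  rw [← charpoly_conj_invol S 𝓜 hSS, hconj, Matrix.charpoly_fromBlocks_zero₂₁]
end

section
/- Let A ∈ ℝ^{n×n}, B ∈ ℝ^{n×m}, K ∈ ℝ^{m×n}, L ∈ ℝ^{n×p}, M ∈ ℝ^{p×n}, A_z ∈ ℝ^{p×p}. Suppose the pre-existing system matrix G = [[A, L], [M, A_z]] is Hurwitz and A + B·K is Hurwitz. Then the retrofit closed-loop matrix 𝓜 = [[A + B·K, L, −B·K], [M, A_z, 0], [0, L, A]] is Hurwitz. -/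
open Matrix Polynomial

lemma isRoot_charpoly_iff {ι : Type*} [Fintype ι] [DecidableEq ι]
    (M : Matrix ι ι ℂ) (μ : ℂ) :
    M.charpoly.IsRoot μ ↔ ∃ v ≠ 0, M.mulVec v = μ • v := by
  have h1 : M.charpoly.eval μ = ((charmatrix M).map (evalRingHom μ)).det := by
    simpa [Matrix.charpoly] using RingHom.map_det (evalRingHom μ) M.charmatrix
  have h2 : (charmatrix M).map (evalRingHom μ) = μ • (1 : Matrix ι ι ℂ) - M := by
    ext i j
    by_cases h : i = j <;>
      simp [h, charmatrix_apply, Matrix.one_apply, diagonal_apply]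
  rw [Polynomial.IsRoot, h1, h2, ← Matrix.exists_mulVec_eq_zero_iff]
  refine exists_congr fun v => and_congr_right fun _ => ?_
  rw [Matrix.sub_mulVec, sub_eq_zero, Matrix.smul_mulVec, Matrix.one_mulVec]
  exact eq_comm

/-- A real square matrix is Hurwitz if every eigenvalue of it, regarded as a matrix
over `ℂ`, has strictly negative real part. -/
def IsHurwitz {ι : Type*} [Fintype ι] [DecidableEq ι] (M : Matrix ι ι ℝ) : Prop :=
  ∀ z : ℂ, (M.map (fun x => (x : ℂ))).charpoly.IsRoot z → z.re < 0

/-- If the pre-existing system matrix `G = [[A, L], [M, A_z]]` is Hurwitz and `A + B·K`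
is Hurwitz, then the retrofit closed-loop matrix
`𝓜 = [[A + B·K, L, −B·K], [M, A_z, 0], [0, L, A]]` is Hurwitz. -/
theorem retrofit_hurwitz {n m p : ℕ}
    (A : Matrix (Fin n) (Fin n) ℝ) (B : Matrix (Fin n) (Fin m) ℝ)
    (K : Matrix (Fin m) (Fin n) ℝ) (L : Matrix (Fin n) (Fin p) ℝ)
    (M : Matrix (Fin p) (Fin n) ℝ) (Az : Matrix (Fin p) (Fin p) ℝ)
    (hG : IsHurwitz (Matrix.fromBlocks A L M Az))
    (hK : IsHurwitz (A + B * K)) :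
    IsHurwitz (Matrix.fromBlocks
        (Matrix.fromBlocks (A + B * K) L M Az)
        (Matrix.fromRows (-(B * K)) (0 : Matrix (Fin p) (Fin n) ℝ))
        (Matrix.fromCols (0 : Matrix (Fin n) (Fin n) ℝ) L)
        A) := by
  intro μ hroot
  set coe : ℝ → ℂ := fun x => (x : ℂ) with hcoe
  have hcoeRH : coe = ((algebraMap ℝ ℂ : ℝ →+* ℂ) : ℝ → ℂ) := rfl
  set Aℂ := A.map coe
  set Lℂ := L.map coe
  set Mℂ := M.map coe
  set Azℂ := Az.map coe
  set BKℂ := (B * K).map coe with hBK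
  -- rewrite the mapped big matrix in block form
  have hmap : ((Matrix.fromBlocks
        (Matrix.fromBlocks (A + B * K) L M Az)
        (Matrix.fromRows (-(B * K)) (0 : Matrix (Fin p) (Fin n) ℝ))
        (Matrix.fromCols (0 : Matrix (Fin n) (Fin n) ℝ) L)
        A).map coe) =
      Matrix.fromBlocks
        (Matrix.fromBlocks (Aℂ + BKℂ) Lℂ Mℂ Azℂ)
        (Matrix.fromRows (-BKℂ) (0 : Matrix (Fin p) (Fin n) ℂ))
        (Matrix.fromCols (0 : Matrix (Fin n) (Fin n) ℂ) Lℂ)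
        Aℂ := by
    ext (⟨i|i⟩|i) (⟨j|j⟩|j) <;>
      simp [Matrix.fromBlocks, Matrix.fromCols, Matrix.fromRows_apply_inl, Matrix.fromRows_apply_inr, Matrix.map_apply, Aℂ, Lℂ, Mℂ, Azℂ, BKℂ, hcoe]
  rw [hmap, isRoot_charpoly_iff] at hroot
  obtain ⟨v, hv0, hveq⟩ := hroot
  set a : Fin n → ℂ := fun i => v (Sum.inl (Sum.inl i)) with ha
  set b : Fin p → ℂ := fun i => v (Sum.inl (Sum.inr i)) with hb
  set c : Fin n → ℂ := fun i => v (Sum.inr i) with hc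
  have hv : v = Sum.elim (Sum.elim a b) c := by
    funext i; rcases i with (i | i) | i <;> rfl
  rw [hv] at hveq
  rw [Matrix.fromBlocks_mulVec] at hveq
  simp only [Sum.elim_comp_inl, Sum.elim_comp_inr, Matrix.fromBlocks_mulVec,
    Matrix.fromRows_mulVec, Matrix.fromCols_mulVec_sumElim] at hveq
  have e1 : (Aℂ + BKℂ) *ᵥ a + Lℂ *ᵥ b + (-BKℂ) *ᵥ c = μ • a := by
    funext i
    have := congrFun hveq (Sum.inl (Sum.inl i))
    simpa using this
  have e2 : Mℂ *ᵥ a + Azℂ *ᵥ b = μ • b := by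
    funext i
    have := congrFun hveq (Sum.inl (Sum.inr i))
    simpa using this
  have e3 : (0 : Matrix (Fin n) (Fin n) ℂ) *ᵥ c + Lℂ *ᵥ b + Aℂ *ᵥ c = μ • c := by
    funext i
    have := congrFun hveq (Sum.inr i)
    simpa [add_assoc] using this
  rw [Matrix.zero_mulVec, zero_add] at e3
  by_cases hw : a - c = 0
  · -- a = c, so (c, b) is an eigenvector of G
    have hac : a = c := sub_eq_zero.mp hw
    apply hG μ
    have hmapG : ((Matrix.fromBlocks A L M Az).map coe) =
        Matrix.fromBlocks Aℂ Lℂ Mℂ Azℂ := by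
      ext (i | i) (j | j) <;> simp [Matrix.fromBlocks, Matrix.map_apply, Aℂ, Lℂ, Mℂ, Azℂ, hcoe]
    rw [hmapG, isRoot_charpoly_iff]
    refine ⟨Sum.elim c b, ?_, ?_⟩
    · intro h
      apply hv0
      rw [hv]
      have hczero : c = 0 := by funext i; exact congrFun h (Sum.inl i)
      have hbzero : b = 0 := by funext i; exact congrFun h (Sum.inr i)
      rw [hczero, hbzero, hac, hczero]
      funext i; rcases i with (i | i) | i <;> rfl
    · rw [Matrix.fromBlocks_mulVec]
      simp only [Sum.elim_comp_inl, Sum.elim_comp_inr]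
      funext i
      rcases i with i | i
      · have := congrFun e3 i
        simp only [Sum.elim_inl, Sum.elim_inr, Pi.add_apply, Pi.smul_apply,
          smul_eq_mul] at this ⊢
        linear_combination this
      · have := congrFun e2 i
        rw [hac] at this
        simp only [Sum.elim_inl, Sum.elim_inr, Pi.add_apply, Pi.smul_apply,
          smul_eq_mul] at this ⊢
        linear_combination this
  · -- a - c is an eigenvector of A + B K
    apply hK μ
    have hmapK : ((A + B * K).map coe) = Aℂ + BKℂ := by
      ext i j; simp [Matrix.map_apply, Aℂ, BKℂ, hcoe]
    rw [hmapK, isRoot_charpoly_iff]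
    refine ⟨a - c, hw, ?_⟩
    have h1 : (Aℂ + BKℂ) *ᵥ a = μ • a - Lℂ *ᵥ b + BKℂ *ᵥ c := by
      rw [← e1, Matrix.neg_mulVec]
      abel
    have h2 : (Aℂ + BKℂ) *ᵥ c = μ • c - Lℂ *ᵥ b + BKℂ *ᵥ c := by
      rw [Matrix.add_mulVec]
      have hAc : Aℂ *ᵥ c = μ • c - Lℂ *ᵥ b := by
        rw [← e3]; abel
      rw [hAc]
    rw [Matrix.mulVec_sub, h1, h2, smul_sub]
    abel
end

section
/- Let A ∈ ℝ^{n×n}, B ∈ ℝ^{n×m}, K ∈ ℝ^{m×n}, and let f̃ : ℝ → ℝ^n be any function. Suppose x, x̂ : ℝ → ℝ^n are differentiable and satisfy, for all t, x'(t) = A·x(t) + B·u(t) + f̃(t) and x̂'(t) = A·x̂(t) + f̃(t), where u(t) = K·(x(t) − x̂(t)). If x̂(0) = x(0), then x̂(t) = x(t) and u(t) = 0 for all t. -/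
open Matrix

/-- Plug-and-play inactivity of the retrofit controller: if `x' = A x + B u + f̃` and
`x̂' = A x̂ + f̃` with `u = K (x − x̂)` and `x̂(0) = x(0)`, then `x̂ ≡ x` and `u ≡ 0`. -/
theorem retrofit_inactive_of_matched_init {n m : ℕ}
    (A : Matrix (Fin n) (Fin n) ℝ) (B : Matrix (Fin n) (Fin m) ℝ)
    (K : Matrix (Fin m) (Fin n) ℝ) (f : ℝ → (Fin n → ℝ))
    (x xh : ℝ → (Fin n → ℝ)) (u : ℝ → (Fin m → ℝ))
    (hx : Differentiable ℝ x) (hxh : Differentiable ℝ xh)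
    (hu : ∀ t, u t = K.mulVec (x t - xh t))
    (hdx : ∀ t, deriv x t = A.mulVec (x t) + B.mulVec (u t) + f t)
    (hdxh : ∀ t, deriv xh t = A.mulVec (xh t) + f t)
    (h0 : xh 0 = x 0) :
    ∀ t, xh t = x t ∧ u t = 0 := by
  set M : Matrix (Fin n) (Fin n) ℝ := A + B * K with hM
  set L : (Fin n → ℝ) →L[ℝ] (Fin n → ℝ) :=
    LinearMap.toContinuousLinearMap M.mulVecLin with hL
  set e : ℝ → (Fin n → ℝ) := fun t => x t - xh t with he
  have hdiffe : Differentiable ℝ e := hx.sub hxh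
  have hde : ∀ t, HasDerivAt e (L (e t)) t := by
    intro t
    have h1 : HasDerivAt e (deriv x t - deriv xh t) t :=
      ((hx t).hasDerivAt).sub ((hxh t).hasDerivAt)
    convert h1 using 1
    rw [hdx, hdxh, hu]
    show M.mulVec (x t - xh t) = _
    rw [hM, Matrix.add_mulVec, ← Matrix.mulVec_mulVec, Matrix.mulVec_sub A]
    abel
  have key : ∀ t, e t = 0 := by
    intro t
    have hmem : (0 : ℝ) ∈ Set.Ioo (-(|t| + 1)) (|t| + 1) := by
      constructor <;> [nlinarith [abs_nonneg t]; nlinarith [abs_nonneg t]]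
    have hmemt : t ∈ Set.Ioo (-(|t| + 1)) (|t| + 1) := by
      constructor <;> [nlinarith [neg_abs_le t]; nlinarith [le_abs_self t]]
    have := ODE_solution_unique_of_mem_Ioo (v := fun _ y => L y) (K := ‖L‖₊)
      (s := fun _ => Set.univ) (f := e) (g := fun _ => (0 : Fin n → ℝ))
      (fun _ _ => L.lipschitz.lipschitzOnWith) hmem
      (fun s _ => ⟨hde s, Set.mem_univ _⟩)
      (fun s _ => ⟨by simpa using hasDerivAt_const s (0 : Fin n → ℝ), Set.mem_univ _⟩)
      (by simp [he, h0])
    exact this hmemt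
  intro t
  have h1 : xh t = x t := by
    have := key t
    rw [he] at this
    have := sub_eq_zero.mp this
    exact this.symm
  refine ⟨h1, ?_⟩
  rw [hu, h1]
  simp
end

section
/- Let X_d > 0, X_d' > 0, X_q > 0, V > 0, θ ∈ ℝ, and real P*, Q* with Q* + V²/X_q > 0. Define δ* := θ + arctan(P*/(Q* + V²/X_q)), E* := (V⁴ + Q*²·X_d'·X_q + Q*·V²·X_d' + Q*·V²·X_q + P*²·X_d'·X_q) / (V·√(P*²·X_q² + Q*²·X_q² + 2·Q*·V²·X_q + V⁴)), and V_fd* := (X_d/X_d')·E* − (X_d/X_d' − 1)·V·cos(δ* − θ). Then: (i) P* = (E*·V/X_d')·sin(δ* − θ) − (V²/2)·(1/X_d' − 1/X_q)·sin(2(δ* − θ)); (ii) Q* = (E*·V/X_d')·cos(δ* − θ) − V²·(sin²(δ* − θ)/X_q + cos²(δ* − θ)/X_d'); and (iii) 0 = −(X_d/X_d')·E* + (X_d/X_d' − 1)·V·cos(δ* − θ) + V_fd*. -/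
open Real

set_option maxHeartbeats 1600000

/-- Closed-form equilibrium of the one-axis synchronous generator model: the values
`δ* = θ + arctan(P*/(Q* + V²/X_q))`,
`E* = (V⁴ + Q*² X_d' X_q + Q* V² X_d' + Q* V² X_q + P*² X_d' X_q) /
      (V √(P*² X_q² + Q*² X_q² + 2 Q* V² X_q + V⁴))`, and
`V_fd* = (X_d/X_d') E* − (X_d/X_d' − 1) V cos(δ* − θ)`
satisfy the steady-state output equations (i)-(ii) and the flux-decay equilibrium
equation (iii). -/
theorem one_axis_equilibrium (Xd Xd' Xq V θ P Q : ℝ)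
    (hXd : 0 < Xd) (hXd' : 0 < Xd') (hXq : 0 < Xq) (hV : 0 < V)
    (hQ : 0 < Q + V ^ 2 / Xq)
    (δ E Vfd : ℝ)
    (hδ : δ = θ + Real.arctan (P / (Q + V ^ 2 / Xq)))
    (hE : E = (V ^ 4 + Q ^ 2 * Xd' * Xq + Q * V ^ 2 * Xd' + Q * V ^ 2 * Xq
          + P ^ 2 * Xd' * Xq) /
        (V * Real.sqrt (P ^ 2 * Xq ^ 2 + Q ^ 2 * Xq ^ 2 + 2 * Q * V ^ 2 * Xq + V ^ 4)))
    (hVfd : Vfd = (Xd / Xd') * E - (Xd / Xd' - 1) * V * Real.cos (δ - θ)) :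
    P = (E * V / Xd') * Real.sin (δ - θ)
        - (V ^ 2 / 2) * (1 / Xd' - 1 / Xq) * Real.sin (2 * (δ - θ)) ∧
      Q = (E * V / Xd') * Real.cos (δ - θ)
        - V ^ 2 * (Real.sin (δ - θ) ^ 2 / Xq + Real.cos (δ - θ) ^ 2 / Xd') ∧
      0 = -(Xd / Xd') * E + (Xd / Xd' - 1) * V * Real.cos (δ - θ) + Vfd := by

  have hVne : V ≠ 0 := ne_of_gt hV
  have hXqne : Xq ≠ 0 := ne_of_gt hXq
  have hXd'ne : Xd' ≠ 0 := ne_of_gt hXd'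
  have hAne : Q + V ^ 2 / Xq ≠ 0 := ne_of_gt hQ
  have hDpos : 0 < (Q + V ^ 2 / Xq) ^ 2 + P ^ 2 :=
    add_pos_of_pos_of_nonneg (pow_pos hQ 2) (sq_nonneg P)
  obtain ⟨W, hWval⟩ : ∃ W, W = Real.sqrt ((Q + V ^ 2 / Xq) ^ 2 + P ^ 2) := ⟨_, rfl⟩
  have hWpos : 0 < W := by rw [hWval]; exact Real.sqrt_pos.mpr hDpos
  have hWne : W ≠ 0 := ne_of_gt hWpos
  have hW2 : W ^ 2 = (Q + V ^ 2 / Xq) ^ 2 + P ^ 2 := by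
    rw [hWval]; exact Real.sq_sqrt hDpos.le
  have hQXq : 0 < Q * Xq + V ^ 2 := by
    have h1 : Q * Xq + V ^ 2 = (Q + V ^ 2 / Xq) * Xq := by field_simp
    rw [h1]; exact mul_pos hQ hXq
  have hδθ : δ - θ = Real.arctan (P / (Q + V ^ 2 / Xq)) := by rw [hδ]; ring
  have hSpos : 0 < Real.sqrt (1 + (P / (Q + V ^ 2 / Xq)) ^ 2) :=
    Real.sqrt_pos.mpr (by positivity)
  have hSne : Real.sqrt (1 + (P / (Q + V ^ 2 / Xq)) ^ 2) ≠ 0 := ne_of_gt hSpos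
  have hkey : W = (Q + V ^ 2 / Xq) * Real.sqrt (1 + (P / (Q + V ^ 2 / Xq)) ^ 2) := by
    rw [hWval, show (Q + V ^ 2 / Xq) ^ 2 + P ^ 2
        = ((Q + V ^ 2 / Xq) * Real.sqrt (1 + (P / (Q + V ^ 2 / Xq)) ^ 2)) ^ 2 from by
      rw [mul_pow, Real.sq_sqrt (by positivity)]; field_simp [hQXq.ne']]
    exact Real.sqrt_sq (by positivity)
  have hsW : Real.sin (δ - θ) = P / W := by
    rw [hδθ, Real.sin_arctan, hkey, ← div_div]
  have hcW : Real.cos (δ - θ) = (Q + V ^ 2 / Xq) / W := by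
    rw [hδθ, Real.cos_arctan, hkey, div_mul_cancel_left₀ hAne, one_div]
  have hEW : E = (V ^ 4 + Q ^ 2 * Xd' * Xq + Q * V ^ 2 * Xd' + Q * V ^ 2 * Xq
      + P ^ 2 * Xd' * Xq) / (V * Xq * W) := by
    rw [hE, show P ^ 2 * Xq ^ 2 + Q ^ 2 * Xq ^ 2 + 2 * Q * V ^ 2 * Xq + V ^ 4
        = (Xq * W) ^ 2 from by rw [mul_pow, hW2]; field_simp; ring,
      Real.sqrt_sq (by positivity)]
    ring
  refine ⟨?_, ?_, by rw [hVfd]; ring⟩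
  · refine Eq.trans (b := ((V ^ 4 + Q ^ 2 * Xd' * Xq + Q * V ^ 2 * Xd' + Q * V ^ 2 * Xq
        + P ^ 2 * Xd' * Xq) * P / (Xd' * Xq)
        - V ^ 2 * (1 / Xd' - 1 / Xq) * P * (Q + V ^ 2 / Xq)) / W ^ 2) ?_ ?_
    · rw [hW2]; field_simp [hDpos.ne']; ring
    · rw [Real.sin_two_mul, hsW, hcW, hEW]; field_simp
  · refine Eq.trans (b := ((V ^ 4 + Q ^ 2 * Xd' * Xq + Q * V ^ 2 * Xd' + Q * V ^ 2 * Xq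
        + P ^ 2 * Xd' * Xq) * (Q + V ^ 2 / Xq) / (Xd' * Xq)
        - V ^ 2 * (P ^ 2 / Xq + (Q + V ^ 2 / Xq) ^ 2 / Xd')) / W ^ 2) ?_ ?_
    · rw [hW2]; field_simp [hDpos.ne']; ring
    · rw [hsW, hcW, hEW]; field_simp
end

section
/- Let X_d' > 0, X_q > 0, V > 0, θ ∈ ℝ, and real P*, Q* with Q* + V²/X_q > 0. Suppose (δ, E) ∈ ℝ² satisfies δ − θ ∈ (−π/2, π/2) together with P* = (E·V/X_d')·sin(δ − θ) − (V²/2)·(1/X_d' − 1/X_q)·sin(2(δ − θ)) and Q* = (E·V/X_d')·cos(δ − θ) − V²·(sin²(δ − θ)/X_q + cos²(δ − θ)/X_d'). Then δ = θ + arctan(P*/(Q* + V²/X_q)) and E = (V⁴ + Q*²·X_d'·X_q + Q*·V²·X_d' + Q*·V²·X_q + P*²·X_d'·X_q) / (V·√(P*²·X_q² + Q*²·X_q² + 2·Q*·V²·X_q + V⁴)); in particular the steady state of the one-axis generator model compatible with the given power-flow solution is unique in this range. -/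
open Real

/-- Uniqueness of the one-axis generator steady state: if `(δ, E)` with
`δ − θ ∈ (−π/2, π/2)` satisfies the steady-state output equations for the given
power-flow solution `(V∠θ, P*, Q*)` with `Q* + V²/X_q > 0`, then `δ` and `E` are given
by the closed-form expressions of the paper. -/
theorem one_axis_equilibrium_unique (Xd' Xq V θ P Q : ℝ)
    (hXd' : 0 < Xd') (hXq : 0 < Xq) (hV : 0 < V)
    (hQ : 0 < Q + V ^ 2 / Xq)
    (δ E : ℝ)
    (hrange : δ - θ ∈ Set.Ioo (-(Real.pi / 2)) (Real.pi / 2))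
    (hP : P = (E * V / Xd') * Real.sin (δ - θ)
        - (V ^ 2 / 2) * (1 / Xd' - 1 / Xq) * Real.sin (2 * (δ - θ)))
    (hQeq : Q = (E * V / Xd') * Real.cos (δ - θ)
        - V ^ 2 * (Real.sin (δ - θ) ^ 2 / Xq + Real.cos (δ - θ) ^ 2 / Xd')) :
    δ = θ + Real.arctan (P / (Q + V ^ 2 / Xq)) ∧
      E = (V ^ 4 + Q ^ 2 * Xd' * Xq + Q * V ^ 2 * Xd' + Q * V ^ 2 * Xq
          + P ^ 2 * Xd' * Xq) /
        (V * Real.sqrt (P ^ 2 * Xq ^ 2 + Q ^ 2 * Xq ^ 2 + 2 * Q * V ^ 2 * Xq + V ^ 4)) := by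
  obtain ⟨h1, h2⟩ := hrange
  set α := δ - θ with hα
  have hc : 0 < Real.cos α := Real.cos_pos_of_mem_Ioo ⟨h1, h2⟩
  have hsc : Real.sin α ^ 2 + Real.cos α ^ 2 = 1 := Real.sin_sq_add_cos_sq α
  have hW : ∃ W : ℝ, W = E * V * Xq - V ^ 2 * Real.cos α * (Xq - Xd') := ⟨_, rfl⟩
  obtain ⟨W, hW⟩ := hW
  have hP2 : P * Xd' * Xq = Real.sin α * W := by
    rw [hP, hW, Real.sin_two_mul]
    field_simp
  have hQ2 : Xd' * (Q * Xq + V ^ 2) = Real.cos α * W := by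
    rw [hQeq, hW]
    field_simp
    linear_combination (-(V * Xd')) * hsc
  have hQK : Q + V ^ 2 / Xq = Real.cos α * W / (Xd' * Xq) := by
    rw [eq_div_iff (mul_pos hXd' hXq).ne']
    field_simp
    linear_combination hQ2
  have hWpos : 0 < W := by
    have h := hQ
    rw [hQK] at h
    have h' : 0 < Real.cos α * W := by
      have := (div_pos_iff.mp h)
      rcases this with ⟨h3, _⟩ | ⟨_, h4⟩
      · exact h3
      · nlinarith [mul_pos hXd' hXq]
    rcases mul_pos_iff.mp h' with ⟨_, h5⟩ | ⟨h6, _⟩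
    · exact h5
    · linarith
  have hPd : P = Real.sin α * W / (Xd' * Xq) := by
    rw [eq_div_iff (mul_pos hXd' hXq).ne']
    linear_combination hP2
  constructor
  · have htan : P / (Q + V ^ 2 / Xq) = Real.tan α := by
      rw [hPd, hQK, Real.tan_eq_sin_div_cos]
      field_simp
    rw [htan, Real.arctan_tan h1 h2]
    ring
  · have harg : Xd' ^ 2 * (P ^ 2 * Xq ^ 2 + Q ^ 2 * Xq ^ 2 + 2 * Q * V ^ 2 * Xq + V ^ 4)
        = W ^ 2 := by
      linear_combination (P * Xd' * Xq + Real.sin α * W) * hP2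
        + (Xd' * (Q * Xq + V ^ 2) + Real.cos α * W) * hQ2 + W ^ 2 * hsc
    have hsqrt : Real.sqrt (P ^ 2 * Xq ^ 2 + Q ^ 2 * Xq ^ 2 + 2 * Q * V ^ 2 * Xq + V ^ 4)
        = W / Xd' := by
      have harg' : P ^ 2 * Xq ^ 2 + Q ^ 2 * Xq ^ 2 + 2 * Q * V ^ 2 * Xq + V ^ 4
          = (W / Xd') ^ 2 := by
        rw [div_pow, eq_div_iff (by positivity)]
        linear_combination harg
      rw [harg', Real.sqrt_sq (by positivity)]
    rw [hsqrt]
    have hEK : E * V * W * Xq = Xd' * Xq * (V ^ 4 + Q ^ 2 * Xd' * Xq + Q * V ^ 2 * Xd'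
        + Q * V ^ 2 * Xq + P ^ 2 * Xd' * Xq) := by
      linear_combination (-(P * Xd' * Xq + Real.sin α * W)) * hP2
        + (-(Xd' * (Q * Xq + V ^ 2)) - Real.cos α * W + Xd' * V ^ 2 - V ^ 2 * Xq) * hQ2
        + (-W) * hW + (-(W ^ 2)) * hsc
    have hEK' : E * V * W = (V ^ 4 + Q ^ 2 * Xd' * Xq + Q * V ^ 2 * Xd'
        + Q * V ^ 2 * Xq + P ^ 2 * Xd' * Xq) * Xd' := by
      apply mul_right_cancel₀ hXq.ne'
      linear_combination hEK
    rw [eq_div_iff (by positivity)]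
    field_simp
    linear_combination hEK'
end

section
/- Let L > 0, R ≥ 0, ω̄ > 0, τ > 0 be real constants, let i_ref : ℝ → ℝ be any function, and suppose i, χ : ℝ → ℝ are differentiable and satisfy, for all t, (L/ω̄)·i'(t) = −R·(i(t) − χ(t)) + (L/(ω̄·τ))·(i_ref(t) − i(t)) and τ·χ'(t) = i_ref(t) − i(t), with χ(0) = i(0). Then χ(t) = i(t) for all t, and consequently τ·i'(t) + i(t) = i_ref(t) for all t. -/
/-- The inner-loop GSC current controller makes the closed-loop current dynamics a
first-order lag: if `(L/ω̄) i' = −R (i − χ) + (L/(ω̄ τ))(i_ref − i)` and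
`τ χ' = i_ref − i` with `χ(0) = i(0)`, then `χ ≡ i` and `τ i' + i = i_ref`. -/
theorem gsc_inner_loop_first_order_lag (L R ω τ : ℝ)
    (hL : 0 < L) (hR : 0 ≤ R) (hω : 0 < ω) (hτ : 0 < τ)
    (iref : ℝ → ℝ) (i χ : ℝ → ℝ)
    (hi : Differentiable ℝ i) (hχ : Differentiable ℝ χ)
    (heq1 : ∀ t, (L / ω) * deriv i t = -R * (i t - χ t) + (L / (ω * τ)) * (iref t - i t))
    (heq2 : ∀ t, τ * deriv χ t = iref t - i t)
    (h0 : χ 0 = i 0) :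
    ∀ t, χ t = i t ∧ τ * deriv i t + i t = iref t := by
  have hL' : L ≠ 0 := ne_of_gt hL
  have hω' : ω ≠ 0 := ne_of_gt hω
  have hτ' : τ ≠ 0 := ne_of_gt hτ
  set c : ℝ := ω * R / L with hc
  -- error e = i - χ
  set e : ℝ → ℝ := fun t => i t - χ t with he
  have hde : Differentiable ℝ e := hi.sub hχ
  have hderiv_e : ∀ t, deriv e t = -c * e t := by
    intro t
    have h1 := heq1 t
    have h2 := heq2 t
    have : deriv e t = deriv i t - deriv χ t := by
      simp [he, deriv_fun_sub (hi t) (hχ t)]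
    rw [this]
    have hdi : deriv i t = (-R * (i t - χ t) + (L / (ω * τ)) * (iref t - i t)) * (ω / L) := by
      field_simp at h1 ⊢
      linarith [h1]
    have hdχ : deriv χ t = (iref t - i t) / τ := by
      field_simp
      linarith [h2]
    rw [hdi, hdχ]
    simp only [he, hc]
    field_simp
    ring
  -- g = exp(ct) * e is constant
  set g : ℝ → ℝ := fun t => Real.exp (c * t) * e t with hg
  have hdg : ∀ t, HasDerivAt g 0 t := by
    intro t
    have h1 : HasDerivAt (fun t => Real.exp (c * t)) (c * Real.exp (c * t)) t := by
      have := ((hasDerivAt_id t).const_mul c).exp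
      simpa [mul_comm] using this
    have h2 : HasDerivAt e (-c * e t) t := by
      rw [← hderiv_e t]; exact (hde t).hasDerivAt
    have : HasDerivAt (fun y => Real.exp (c * y) * e y) _ t := h1.mul h2
    convert this using 1
    ring
  have hgc : ∀ t, g t = g 0 := by
    intro t
    exact is_const_of_deriv_eq_zero (fun x => (hdg x).differentiableAt)
      (fun x => (hdg x).deriv) t 0
  have he0 : ∀ t, e t = 0 := by
    intro t
    have := hgc t
    have hg0 : g 0 = 0 := by simp [hg, he, h0]
    rw [hg0] at this
    have hexp : Real.exp (c * t) ≠ 0 := Real.exp_ne_zero _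
    have : Real.exp (c * t) * e t = 0 := this
    exact (mul_eq_zero.mp this).resolve_left hexp
  intro t
  have hχi : χ t = i t := by
    have := he0 t; simp [he] at this; linarith
  refine ⟨hχi, ?_⟩
  have h1 := heq1 t
  rw [show i t - χ t = 0 by linarith] at h1
  field_simp at h1
  have h2 : L * ω * (deriv i t * τ) = L * ω * (iref t - i t) := by linear_combination ω * h1
  have h3 : deriv i t * τ = iref t - i t := mul_left_cancel₀ (by positivity) h2
  linarith
end
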